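/- Let q > 1 be a real number, X ∈ ℂ with X ≠ 0 and X² ≠ 1, and let ε ∈ {1, −1}. Suppose a sequence T : ℕ → ℂ satisfies T₀ = 1, T₁ = (q^{3/2}(X + X⁻¹) − εq − 1)/(q³ − εq), and the recurrence q³·T_{r+1} − q^{3/2}(X + X⁻¹)·T_r + T_{r−1} = 0 for all r ≥ 1. Then for every r ≥ 1: T_r = c₊·(q^{−3/2}X)^r + c₋·(q^{−3/2}X⁻¹)^r, where c₊ = (q^{3/2}X − 1)(1 − ε·q^{−1/2}X⁻¹)/((X − X⁻¹)(q^{3/2} − ε·q^{−1/2})) and c₋ = −(q^{3/2}X⁻¹ − 1)(1 − ε·q^{−1/2}X)/((X − X⁻¹)(q^{3/2} − ε·q^{−1/2})). -/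

import Mathlib

private lemma aux_div (a b d t r1 r2 : ℂ) (hd : d ≠ 0) (r : ℕ)
    (h : d * t = a * r1 ^ r - b * r2 ^ r) :
    t = a / d * r1 ^ r + (-(b / d)) * r2 ^ r := by
  have h2 : d * (a / d * r1 ^ r + (-(b / d)) * r2 ^ r) = a * r1 ^ r - b * r2 ^ r := by
    field_simp
    ring
  exact mul_left_cancel₀ hd (h.trans h2.symm)

/-- solution of the Hecke recurrence for the spherical function
`T_{r,ζ}`. Here `s = √q`, so `s³ = q^{3/2}` and `s⁻¹ = q^{−1/2}`; `ε = 1` is the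
split case and `ε = −1` the non-split case. -/
theorem stmt_10 (q : ℝ) (hq : 1 < q) (X ε : ℂ) (hX0 : X ≠ 0) (hX1 : X ^ 2 ≠ 1)
    (hε : ε = 1 ∨ ε = -1)
    (s : ℂ) (hs : s = ((Real.sqrt q : ℝ) : ℂ))
    (T : ℕ → ℂ) (hT0 : T 0 = 1)
    (hT1 : T 1 = (s ^ 3 * (X + X⁻¹) - ε * (q : ℂ) - 1) / ((q : ℂ) ^ 3 - ε * (q : ℂ)))
    (hrec : ∀ r : ℕ, 1 ≤ r →
      (q : ℂ) ^ 3 * T (r + 1) - s ^ 3 * (X + X⁻¹) * T r + T (r - 1) = 0) :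
    ∀ r : ℕ, 1 ≤ r →
      T r = (s ^ 3 * X - 1) * (1 - ε * s⁻¹ * X⁻¹)
              / ((X - X⁻¹) * (s ^ 3 - ε * s⁻¹)) * ((s ^ 3)⁻¹ * X) ^ r
          + (-((s ^ 3 * X⁻¹ - 1) * (1 - ε * s⁻¹ * X)
              / ((X - X⁻¹) * (s ^ 3 - ε * s⁻¹)))) * ((s ^ 3)⁻¹ * X⁻¹) ^ r := by
  have hq0 : (0:ℝ) < q := by linarith
  have hs2 : s ^ 2 = (q : ℂ) := by
    rw [hs]
    norm_cast
    rw [sq]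
    exact Real.mul_self_sqrt hq0.le
  have hsne : s ≠ 0 := by
    rw [hs]
    exact_mod_cast (Real.sqrt_pos.mpr hq0).ne'
  have hXX : X - X⁻¹ ≠ 0 := by
    intro h
    apply hX1
    have h2 : X ^ 2 - 1 = X * (X - X⁻¹) := by field_simp
    have : X ^ 2 - 1 = 0 := by rw [h2, h, mul_zero]
    linear_combination this
  have hqc : ((q:ℝ) : ℂ) ≠ 0 := by exact_mod_cast hq0.ne'
  have hq2 : ((q:ℝ)^2 : ℂ) - ε ≠ 0 := by
    rcases hε with rfl | rfl
    · intro h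
      have : ((q^2 : ℝ) : ℂ) = ((1:ℝ):ℂ) := by push_cast; linear_combination h
      have := Complex.ofReal_injective this
      nlinarith
    · intro h
      have : ((q^2 : ℝ) : ℂ) = ((-1:ℝ):ℂ) := by push_cast; linear_combination h
      have := Complex.ofReal_injective this
      nlinarith
  have hs4 : s ^ 4 - ε ≠ 0 := by
    have h : s ^ 4 = ((q:ℝ)^2 : ℂ) := by push_cast; rw [← hs2]; ring
    rw [h]; exact hq2
  have hden : s ^ 3 - ε * s⁻¹ ≠ 0 := by
    have h : s ^ 3 - ε * s⁻¹ = (s ^ 4 - ε) * s⁻¹ := by field_simp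
    rw [h]
    exact mul_ne_zero hs4 (inv_ne_zero hsne)
  have hD : (X - X⁻¹) * (s ^ 3 - ε * s⁻¹) ≠ 0 := mul_ne_zero hXX hden
  have hq3 : ((q:ℝ):ℂ) ^ 3 - ε * ((q:ℝ):ℂ) ≠ 0 := by
    have h : ((q:ℝ):ℂ) ^ 3 - ε * ((q:ℝ):ℂ) = (((q:ℝ)^2 : ℂ) - ε) * ((q:ℝ):ℂ) := by
      push_cast; ring
    rw [h]
    exact mul_ne_zero hq2 hqc
  have hq3c : ((q:ℝ):ℂ) ^ 3 ≠ 0 := pow_ne_zero 3 hqc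
  -- the division-free key identity
  have key : ∀ r : ℕ,
      (X - X⁻¹) * (s ^ 3 - ε * s⁻¹) * T r
        = (s ^ 3 * X - 1) * (1 - ε * s⁻¹ * X⁻¹) * ((s ^ 3)⁻¹ * X) ^ r
          - (s ^ 3 * X⁻¹ - 1) * (1 - ε * s⁻¹ * X) * ((s ^ 3)⁻¹ * X⁻¹) ^ r := by
    have base0 : (X - X⁻¹) * (s ^ 3 - ε * s⁻¹) * T 0
        = (s ^ 3 * X - 1) * (1 - ε * s⁻¹ * X⁻¹) * ((s ^ 3)⁻¹ * X) ^ 0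
          - (s ^ 3 * X⁻¹ - 1) * (1 - ε * s⁻¹ * X) * ((s ^ 3)⁻¹ * X⁻¹) ^ 0 := by
      rw [hT0]
      simp only [pow_zero, mul_one]
      field_simp
      ring
    have base1 : (X - X⁻¹) * (s ^ 3 - ε * s⁻¹) * T 1
        = (s ^ 3 * X - 1) * (1 - ε * s⁻¹ * X⁻¹) * ((s ^ 3)⁻¹ * X) ^ 1
          - (s ^ 3 * X⁻¹ - 1) * (1 - ε * s⁻¹ * X) * ((s ^ 3)⁻¹ * X⁻¹) ^ 1 := by
      rw [hT1, ← mul_div_assoc, div_eq_iff hq3, ← hs2]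
      simp only [pow_one]
      have hsu : s * s⁻¹ = 1 := mul_inv_cancel₀ hsne
      have hXv : X * X⁻¹ = 1 := mul_inv_cancel₀ hX0
      linear_combination (ε * s⁻¹ * X⁻¹ + s * ε * s⁻¹ ^ 2 * X⁻¹ + (-1) * s * ε ^ 2 * X⁻¹ +
            (-1) * s ^ 3 * X⁻¹ + (-1) * s ^ 3 * ε * s⁻¹ * X⁻¹ ^ 2 + (-1) * s ^ 4 * s⁻¹ * X⁻¹ +
            (-1) * s ^ 4 * ε * s⁻¹ ^ 2 * X⁻¹ ^ 2 + (-1) * s ^ 5 * s⁻¹ ^ 2 * X⁻¹ + s ^ 6 * X⁻¹ ^ 2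
            + s ^ 7 * s⁻¹ * X⁻¹ ^ 2 + s ^ 8 * s⁻¹ ^ 2 * X⁻¹ ^ 2 + (-1) * X * ε * s⁻¹ + (-1) * X *
            s * ε * s⁻¹ ^ 2 + X * s * ε ^ 2 + X * s * ε ^ 2 * X⁻¹ ^ 2 + X * s ^ 2 * ε ^ 2 * s⁻¹ *
            X⁻¹ ^ 2 + X * s ^ 3 + X * s ^ 3 * ε ^ 2 * s⁻¹ ^ 2 * X⁻¹ ^ 2 + X * s ^ 4 * s⁻¹ + X * s
            ^ 4 * ε ^ 2 * s⁻¹ ^ 3 * X⁻¹ ^ 2 + X * s ^ 5 * s⁻¹ ^ 2 + (-1) * X * s ^ 5 * ε * X⁻¹ ^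
            2 + (-1) * X * s ^ 6 * ε * s⁻¹ * X⁻¹ ^ 2 + (-1) * X * s ^ 7 * ε * s⁻¹ ^ 2 * X⁻¹ ^ 2 +
            (-1) * X * s ^ 8 * ε * s⁻¹ ^ 3 * X⁻¹ ^ 2 + (-1) * X ^ 2 * s * ε ^ 2 * X⁻¹ + (-1) * X
            ^ 2 * s ^ 2 * ε ^ 2 * s⁻¹ * X⁻¹ + X ^ 2 * s ^ 3 * ε * s⁻¹ + (-1) * X ^ 2 * s ^ 3 * ε
            ^ 2 * s⁻¹ ^ 2 * X⁻¹ + X ^ 2 * s ^ 4 * ε * s⁻¹ ^ 2 + (-1) * X ^ 2 * s ^ 4 * ε ^ 2 *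
            s⁻¹ ^ 3 * X⁻¹ + X ^ 2 * s ^ 5 * ε * X⁻¹ + (-1) * X ^ 2 * s ^ 6 + X ^ 2 * s ^ 6 * ε *
            s⁻¹ * X⁻¹ + (-1) * X ^ 2 * s ^ 7 * s⁻¹ + X ^ 2 * s ^ 7 * ε * s⁻¹ ^ 2 * X⁻¹ + (-1) * X
            ^ 2 * s ^ 8 * s⁻¹ ^ 2 + X ^ 2 * s ^ 8 * ε * s⁻¹ ^ 3 * X⁻¹) * hsu + (s * ε ^ 2 * X⁻¹ +
            (-1) * s ^ 5 * ε * X⁻¹ + (-1) * X * s * ε ^ 2 + X * s ^ 5 * ε) * hXv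
    have step : ∀ k : ℕ,
        (X - X⁻¹) * (s ^ 3 - ε * s⁻¹) * T k
          = (s ^ 3 * X - 1) * (1 - ε * s⁻¹ * X⁻¹) * ((s ^ 3)⁻¹ * X) ^ k
            - (s ^ 3 * X⁻¹ - 1) * (1 - ε * s⁻¹ * X) * ((s ^ 3)⁻¹ * X⁻¹) ^ k ∧
        (X - X⁻¹) * (s ^ 3 - ε * s⁻¹) * T (k + 1)
          = (s ^ 3 * X - 1) * (1 - ε * s⁻¹ * X⁻¹) * ((s ^ 3)⁻¹ * X) ^ (k + 1)
            - (s ^ 3 * X⁻¹ - 1) * (1 - ε * s⁻¹ * X) * ((s ^ 3)⁻¹ * X⁻¹) ^ (k + 1) := by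
      intro k
      induction k with
      | zero => exact ⟨base0, base1⟩
      | succ k ih =>
        refine ⟨ih.2, ?_⟩
        have h := hrec (k + 1) (by omega)
        simp only [Nat.add_sub_cancel] at h
        have ha : s ^ 3 * (s ^ 3)⁻¹ = 1 := mul_inv_cancel₀ (pow_ne_zero 3 hsne)
        have hb : X * X⁻¹ = 1 := mul_inv_cancel₀ hX0
        have key1 : ((s^2):ℂ) ^ 3 * ((s^3)⁻¹ * X) ^ 2 - s ^ 3 * (X + X⁻¹) * ((s^3)⁻¹ * X) + 1
            = 0 := by
          linear_combination (s ^ 3 * (s ^ 3)⁻¹ * X ^ 2 - 1) * ha - s ^ 3 * (s ^ 3)⁻¹ * hb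
        have key2 : ((s^2):ℂ) ^ 3 * ((s^3)⁻¹ * X⁻¹) ^ 2 - s ^ 3 * (X + X⁻¹) * ((s^3)⁻¹ * X⁻¹) + 1
            = 0 := by
          linear_combination (s ^ 3 * (s ^ 3)⁻¹ * X⁻¹ ^ 2 - 1) * ha - s ^ 3 * (s ^ 3)⁻¹ * hb
        have hmul : ((q:ℝ):ℂ) ^ 3 * ((X - X⁻¹) * (s ^ 3 - ε * s⁻¹) * T (k + 1 + 1))
            = ((q:ℝ):ℂ) ^ 3 *
              ((s ^ 3 * X - 1) * (1 - ε * s⁻¹ * X⁻¹) * ((s ^ 3)⁻¹ * X) ^ (k + 1 + 1)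
               - (s ^ 3 * X⁻¹ - 1) * (1 - ε * s⁻¹ * X) * ((s ^ 3)⁻¹ * X⁻¹) ^ (k + 1 + 1)) := by
          have e1 : ((s ^ 3)⁻¹ * X) ^ (k + 1 + 1) = ((s ^ 3)⁻¹ * X) ^ k * ((s ^ 3)⁻¹ * X) ^ 2 := by
            ring
          have e2 : ((s ^ 3)⁻¹ * X⁻¹) ^ (k + 1 + 1)
              = ((s ^ 3)⁻¹ * X⁻¹) ^ k * ((s ^ 3)⁻¹ * X⁻¹) ^ 2 := by ring
          have e3 : ((s ^ 3)⁻¹ * X) ^ (k + 1) = ((s ^ 3)⁻¹ * X) ^ k * ((s ^ 3)⁻¹ * X) := by ring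
          have e4 : ((s ^ 3)⁻¹ * X⁻¹) ^ (k + 1) = ((s ^ 3)⁻¹ * X⁻¹) ^ k * ((s ^ 3)⁻¹ * X⁻¹) := by
            ring
          rw [e1, e2]
          rw [e3, e4] at ih
          have hq' : ((q:ℝ):ℂ) = s ^ 2 := hs2.symm
          rw [hq'] at h ⊢
          linear_combination ((X - X⁻¹) * (s ^ 3 - ε * s⁻¹)) * h
            + (s ^ 3 * (X + X⁻¹)) * ih.2 - ih.1
            - (s ^ 3 * X - 1) * (1 - ε * s⁻¹ * X⁻¹) * ((s ^ 3)⁻¹ * X) ^ k * key1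
            + (s ^ 3 * X⁻¹ - 1) * (1 - ε * s⁻¹ * X) * ((s ^ 3)⁻¹ * X⁻¹) ^ k * key2
        exact mul_left_cancel₀ hq3c hmul
    intro r
    exact (step r).1
  intro r _
  exact aux_div _ _ _ _ _ _ hD r (key r)
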